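/- Let X ~ P_X be a random variable in ℝ^n, F : ℝ^n → ℝ^d an encoder, G : ℝ^d → ℝ^n a differentiable decoder with ‖∇G‖_∞ ≤ L, Y = F(X), and Z ~ P_Z a random variable in ℝ^d. Then W2(P_X, P_{G(Z)}) ≤ (E‖X − G(Y)‖²)^{1/2} + L · W2(P_Y, P_Z). -/

import Mathlib

open MeasureTheory ENNReal ProbabilityTheory
open scoped ProbabilityTheory

/-- The L2-Wasserstein distance between two measures on a normed space, defined as the
infimum over couplings `π` of `(∫ ‖u - v‖² dπ)^(1/2)`. -/
noncomputable def W2 {E : Type*} [NormedAddCommGroup E] [MeasurableSpace E]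
    (μ ν : Measure E) : ℝ≥0∞ :=
  ⨅ (π : Measure (E × E)) (_ : π.map Prod.fst = μ ∧ π.map Prod.snd = ν),
    (∫⁻ p, (‖p.1 - p.2‖₊ : ℝ≥0∞) ^ 2 ∂π) ^ (1/2 : ℝ)

lemma W2_le_coupling {E : Type*} [NormedAddCommGroup E] [MeasurableSpace E]
    {μ ν : Measure E} (π : Measure (E × E))
    (h1 : π.map Prod.fst = μ) (h2 : π.map Prod.snd = ν) :
    W2 μ ν ≤ (∫⁻ p, (‖p.1 - p.2‖₊ : ℝ≥0∞) ^ 2 ∂π) ^ (1/2 : ℝ) :=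
  iInf_le_of_le π (iInf_le _ ⟨h1, h2⟩)

lemma exists_coupling_lt {E : Type*} [NormedAddCommGroup E] [MeasurableSpace E]
    {μ ν : Measure E} {t : ℝ≥0∞} (h : W2 μ ν < t) :
    ∃ π : Measure (E × E), (π.map Prod.fst = μ ∧ π.map Prod.snd = ν) ∧
      (∫⁻ p, (‖p.1 - p.2‖₊ : ℝ≥0∞) ^ 2 ∂π) ^ (1/2 : ℝ) < t := by
  simp only [W2, iInf_lt_iff] at h
  obtain ⟨π, hπ, hc⟩ := h
  exact ⟨π, hπ, hc⟩

/-- Proposition 1(b): for an encoder `F`, a decoder `G` with derivative bounded by `L`, latent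
code `Y = F(X)` and prior variable `Z`, we have
`W2(P_X, P_{G(Z)}) ≤ (E‖X − G(Y)‖²)^{1/2} + L · W2(P_Y, P_Z)`. -/
theorem wasserstein_reconstruction_bound {n d : ℕ}
    {Ω : Type*} [MeasurableSpace Ω] (P : Measure Ω) [IsProbabilityMeasure P]
    (X : Ω → EuclideanSpace ℝ (Fin n)) (Z : Ω → EuclideanSpace ℝ (Fin d))
    (hX : Measurable X) (hZ : Measurable Z)
    (F : EuclideanSpace ℝ (Fin n) → EuclideanSpace ℝ (Fin d))
    (G : EuclideanSpace ℝ (Fin d) → EuclideanSpace ℝ (Fin n))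
    (hF : Measurable F) (hG : Differentiable ℝ G) (L : ℝ) (hL : 0 ≤ L)
    (hgrad : ∀ z, ‖fderiv ℝ G z‖ ≤ L) :
    W2 (P.map X) (P.map (fun ω => G (Z ω))) ≤
      (∫⁻ ω, (‖X ω - G (F (X ω))‖₊ : ℝ≥0∞) ^ 2 ∂P) ^ (1/2 : ℝ)
        + ENNReal.ofReal L * W2 (P.map (fun ω => F (X ω))) (P.map Z) := by
  classical
  have hGm : Measurable G := hG.continuous.measurable
  have hYm : Measurable fun ω => F (X ω) := hF.comp hX
  have hLip : LipschitzWith L.toNNReal G :=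
    lipschitzWith_of_nnnorm_fderiv_le hG fun x => by
      rw [← norm_toNNReal]; exact Real.toNNReal_mono (hgrad x)
  set A : ℝ≥0∞ := (∫⁻ ω, (‖X ω - G (F (X ω))‖₊ : ℝ≥0∞) ^ 2 ∂P) ^ (1/2 : ℝ) with hA
  set c : ℝ≥0∞ := ENNReal.ofReal L with hc
  have hc2 : c = (L.toNNReal : ℝ≥0∞) := rfl
  have hc_ne : c ≠ ∞ := ENNReal.ofReal_ne_top
  -- the reconstruction coupling bound
  have haveA : W2 (P.map X) (P.map (fun ω => G (F (X ω)))) ≤ A := by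
    have hpair : Measurable fun ω => (X ω, G (F (X ω))) := hX.prodMk (hGm.comp hYm)
    have hmeas : Measurable fun p : EuclideanSpace ℝ (Fin n) × EuclideanSpace ℝ (Fin n) =>
        (‖p.1 - p.2‖₊ : ℝ≥0∞) ^ 2 := by fun_prop
    refine le_trans (W2_le_coupling (P.map (fun ω => (X ω, G (F (X ω))))) ?_ ?_) ?_
    · rw [Measure.map_map measurable_fst hpair]; rfl
    · rw [Measure.map_map measurable_snd hpair]; rfl
    · rw [lintegral_map hmeas hpair]
  -- key gluing estimate
  have key : ∀ π : Measure (EuclideanSpace ℝ (Fin d) × EuclideanSpace ℝ (Fin d)),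
      π.map Prod.fst = P.map (fun ω => F (X ω)) → π.map Prod.snd = P.map Z →
      W2 (P.map X) (P.map fun ω => G (Z ω)) ≤
        A + c * (∫⁻ p, (‖p.1 - p.2‖₊ : ℝ≥0∞) ^ 2 ∂π) ^ (1/2 : ℝ) := by
    intro π hπ1 hπ2
    have hπprob : IsProbabilityMeasure π := by
      constructor
      have h := congrArg (fun μ : Measure (EuclideanSpace ℝ (Fin d)) => μ Set.univ) hπ1
      simpa [Measure.map_apply measurable_fst MeasurableSet.univ,
        Measure.map_apply hYm MeasurableSet.univ] using h
    set σm : Measure (EuclideanSpace ℝ (Fin n) × EuclideanSpace ℝ (Fin d)) :=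
      P.map (fun ω => (X ω, F (X ω))) with hσ
    have hXYm : Measurable fun ω => (X ω, F (X ω)) := hX.prodMk hYm
    have hσprob : IsProbabilityMeasure σm := Measure.isProbabilityMeasure_map hXYm.aemeasurable
    have hσfst : σm.map Prod.fst = P.map X := by
      rw [hσ, Measure.map_map measurable_fst hXYm]; rfl
    have hσsnd : σm.map Prod.snd = P.map (fun ω => F (X ω)) := by
      rw [hσ, Measure.map_map measurable_snd hXYm]; rfl
    set κ := π.condKernel with hκ
    have hfstπ : π.fst = P.map (fun ω => F (X ω)) := hπ1
    have hdis : π.fst ⊗ₘ κ = π := π.disintegrate π.condKernel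
    set κ' := κ.comap Prod.snd measurable_snd with hκ'
    set τ := σm ⊗ₘ κ' with hτ
    have hτfst : τ.map Prod.fst = σm := Measure.fst_compProd σm κ'
    have hmidm : Measurable fun p : (EuclideanSpace ℝ (Fin n) × EuclideanSpace ℝ (Fin d)) ×
        EuclideanSpace ℝ (Fin d) => (p.1.2, p.2) :=
      (measurable_snd.comp measurable_fst).prodMk measurable_snd
    have hmid : τ.map (fun p => (p.1.2, p.2)) = π := by
      ext s hs
      rw [Measure.map_apply hmidm hs, hτ, Measure.compProd_apply (hmidm hs), ← hdis,
        Measure.compProd_apply hs]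
      have hpt : ∀ xy : EuclideanSpace ℝ (Fin n) × EuclideanSpace ℝ (Fin d),
          κ' xy (Prod.mk xy ⁻¹' ((fun p : (EuclideanSpace ℝ (Fin n) ×
            EuclideanSpace ℝ (Fin d)) × EuclideanSpace ℝ (Fin d) => (p.1.2, p.2)) ⁻¹' s))
          = κ xy.2 (Prod.mk xy.2 ⁻¹' s) := by
        intro xy
        rw [hκ', ProbabilityTheory.Kernel.comap_apply]
        rfl
      simp_rw [hpt]
      rw [hfstπ, ← hσsnd,
        lintegral_map (ProbabilityTheory.Kernel.measurable_kernel_prodMk_left hs) measurable_snd]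
    set q : (EuclideanSpace ℝ (Fin n) × EuclideanSpace ℝ (Fin d)) × EuclideanSpace ℝ (Fin d) →
        EuclideanSpace ℝ (Fin n) × EuclideanSpace ℝ (Fin n) := fun p => (p.1.1, G p.2) with hq
    have hqm : Measurable q := (measurable_fst.comp measurable_fst).prodMk (hGm.comp measurable_snd)
    refine le_trans (W2_le_coupling (τ.map q) ?_ ?_) ?_
    · rw [Measure.map_map measurable_fst hqm]
      have he : Prod.fst ∘ q = (Prod.fst ∘ Prod.fst :
          (EuclideanSpace ℝ (Fin n) × EuclideanSpace ℝ (Fin d)) × EuclideanSpace ℝ (Fin d) → _) :=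
        rfl
      rw [he, ← Measure.map_map measurable_fst measurable_fst, hτfst, hσfst]
    · rw [Measure.map_map measurable_snd hqm]
      have he : Prod.snd ∘ q = (G ∘ Prod.snd) ∘ (fun p : (EuclideanSpace ℝ (Fin n) ×
          EuclideanSpace ℝ (Fin d)) × EuclideanSpace ℝ (Fin d) => (p.1.2, p.2)) := rfl
      rw [he, ← Measure.map_map (hGm.comp measurable_snd) hmidm, hmid,
        ← Measure.map_map hGm measurable_snd, hπ2, Measure.map_map hGm hZ]
      rfl
    · -- cost estimate
      set f : (EuclideanSpace ℝ (Fin n) × EuclideanSpace ℝ (Fin d)) × EuclideanSpace ℝ (Fin d)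
          → ℝ≥0∞ := fun p => (‖p.1.1 - G p.1.2‖₊ : ℝ≥0∞) with hfdef
      set g : (EuclideanSpace ℝ (Fin n) × EuclideanSpace ℝ (Fin d)) × EuclideanSpace ℝ (Fin d)
          → ℝ≥0∞ := fun p => (‖G p.1.2 - G p.2‖₊ : ℝ≥0∞) with hgdef
      have hfm : Measurable f := by fun_prop
      have hgm2 : Measurable g := by fun_prop
      have hcost : ∫⁻ p, (‖p.1 - p.2‖₊ : ℝ≥0∞) ^ 2 ∂(τ.map q)
          = ∫⁻ p, (‖p.1.1 - G p.2‖₊ : ℝ≥0∞) ^ 2 ∂τ := by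
        have hmeas : Measurable fun p : EuclideanSpace ℝ (Fin n) × EuclideanSpace ℝ (Fin n) =>
            (‖p.1 - p.2‖₊ : ℝ≥0∞) ^ 2 := by fun_prop
        rw [lintegral_map hmeas hqm]
      have hnat : ∀ x : ℝ≥0∞, x ^ (2 : ℕ) = x ^ (2 : ℝ) := fun x => by
        rw [← ENNReal.rpow_natCast x 2]; norm_num
      have hmink : (∫⁻ p, (‖p.1.1 - G p.2‖₊ : ℝ≥0∞) ^ 2 ∂τ) ^ (1/2 : ℝ)
          ≤ (∫⁻ p, f p ^ 2 ∂τ) ^ (1/2 : ℝ) + (∫⁻ p, g p ^ 2 ∂τ) ^ (1/2 : ℝ) := by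
        have hle : (∫⁻ p, (‖p.1.1 - G p.2‖₊ : ℝ≥0∞) ^ 2 ∂τ)
            ≤ ∫⁻ p, (f p + g p) ^ 2 ∂τ := by
          refine lintegral_mono fun p => pow_le_pow_left' ?_ 2
          show (‖p.1.1 - G p.2‖₊ : ℝ≥0∞) ≤
            (‖p.1.1 - G p.1.2‖₊ : ℝ≥0∞) + (‖G p.1.2 - G p.2‖₊ : ℝ≥0∞)
          have := nndist_triangle p.1.1 (G p.1.2) (G p.2)
          simp only [nndist_eq_nnnorm_sub] at this
          exact_mod_cast this
        refine le_trans (ENNReal.rpow_le_rpow hle (by norm_num)) ?_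
        simp_rw [hnat]
        have h12 : (1/2 : ℝ) = 1 / (2 : ℝ) := by norm_num
        simpa using ENNReal.lintegral_Lp_add_le hfm.aemeasurable hgm2.aemeasurable
          (one_le_two : (1:ℝ) ≤ 2) (μ := τ)
      have hfint : ∫⁻ p, f p ^ 2 ∂τ = ∫⁻ ω, (‖X ω - G (F (X ω))‖₊ : ℝ≥0∞) ^ 2 ∂P := by
        have hmf : Measurable fun xy : EuclideanSpace ℝ (Fin n) × EuclideanSpace ℝ (Fin d) =>
            (‖xy.1 - G xy.2‖₊ : ℝ≥0∞) ^ 2 := by fun_prop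
        calc ∫⁻ p, f p ^ 2 ∂τ
            = ∫⁻ xy, (‖xy.1 - G xy.2‖₊ : ℝ≥0∞) ^ 2 ∂(τ.map Prod.fst) :=
              (lintegral_map hmf measurable_fst).symm
          _ = ∫⁻ xy, (‖xy.1 - G xy.2‖₊ : ℝ≥0∞) ^ 2 ∂σm := by rw [hτfst]
          _ = ∫⁻ ω, (‖X ω - G (F (X ω))‖₊ : ℝ≥0∞) ^ 2 ∂P := by rw [hσ, lintegral_map hmf hXYm]
      have hgint : ∫⁻ p, g p ^ 2 ∂τ
          = ∫⁻ r, (‖G r.1 - G r.2‖₊ : ℝ≥0∞) ^ 2 ∂π := by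
        have hmg : Measurable fun r : EuclideanSpace ℝ (Fin d) × EuclideanSpace ℝ (Fin d) =>
            (‖G r.1 - G r.2‖₊ : ℝ≥0∞) ^ 2 := by fun_prop
        rw [← hmid, lintegral_map hmg hmidm]
      have hgle : ∫⁻ r, (‖G r.1 - G r.2‖₊ : ℝ≥0∞) ^ 2 ∂π
          ≤ c ^ 2 * ∫⁻ r, (‖r.1 - r.2‖₊ : ℝ≥0∞) ^ 2 ∂π := by
        rw [← lintegral_const_mul _ (by fun_prop)]
        refine lintegral_mono fun r => ?_
        have h1 : (‖G r.1 - G r.2‖₊ : ℝ≥0∞) ≤ c * (‖r.1 - r.2‖₊ : ℝ≥0∞) := by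
          have := hLip r.1 r.2
          rw [edist_eq_enorm_sub, edist_eq_enorm_sub] at this
          rw [hc2]
          exact this
        calc (‖G r.1 - G r.2‖₊ : ℝ≥0∞) ^ 2 ≤ (c * (‖r.1 - r.2‖₊ : ℝ≥0∞)) ^ 2 :=
              pow_le_pow_left' h1 2
          _ = c ^ 2 * (‖r.1 - r.2‖₊ : ℝ≥0∞) ^ 2 := mul_pow _ _ 2
      have hsplit : (c ^ 2 * ∫⁻ r, (‖r.1 - r.2‖₊ : ℝ≥0∞) ^ 2 ∂π) ^ (1/2 : ℝ)
          = c * (∫⁻ r, (‖r.1 - r.2‖₊ : ℝ≥0∞) ^ 2 ∂π) ^ (1/2 : ℝ) := by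
        rw [ENNReal.mul_rpow_of_nonneg _ _ (by norm_num : (0:ℝ) ≤ 1/2),
          hnat c, ← ENNReal.rpow_mul]
        norm_num
      calc (∫⁻ p, (‖p.1 - p.2‖₊ : ℝ≥0∞) ^ 2 ∂(τ.map q)) ^ (1/2 : ℝ)
          = (∫⁻ p, (‖p.1.1 - G p.2‖₊ : ℝ≥0∞) ^ 2 ∂τ) ^ (1/2 : ℝ) := by rw [hcost]
        _ ≤ (∫⁻ p, f p ^ 2 ∂τ) ^ (1/2 : ℝ) + (∫⁻ p, g p ^ 2 ∂τ) ^ (1/2 : ℝ) := hmink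
        _ = A + (∫⁻ r, (‖G r.1 - G r.2‖₊ : ℝ≥0∞) ^ 2 ∂π) ^ (1/2 : ℝ) := by
            rw [hfint, hgint, hA]
        _ ≤ A + (c ^ 2 * ∫⁻ r, (‖r.1 - r.2‖₊ : ℝ≥0∞) ^ 2 ∂π) ^ (1/2 : ℝ) :=
            add_le_add_right (ENNReal.rpow_le_rpow hgle (by norm_num)) A
        _ = A + c * (∫⁻ r, (‖r.1 - r.2‖₊ : ℝ≥0∞) ^ 2 ∂π) ^ (1/2 : ℝ) := by rw [hsplit]
  -- combine
  rcases eq_or_lt_of_le hL with rfl | hLpos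
  · -- L = 0 : G is constant
    have hconst : ∀ x y, G x = G y := fun x y => by
      have h := hLip x y
      simp only [Real.toNNReal_zero, ENNReal.coe_zero, zero_mul] at h
      exact edist_le_zero.mp h
    have hfun : (fun ω => G (Z ω)) = fun ω => G (F (X ω)) := funext fun ω => hconst _ _
    rw [hfun]
    refine le_trans haveA ?_
    have hc0 : c = 0 := by rw [hc]; simp
    rw [hc0, zero_mul, add_zero]
  · -- L > 0
    have hc0 : c ≠ 0 := by
      rw [hc]; exact (ENNReal.ofReal_pos.mpr hLpos).ne'
    refine ENNReal.le_of_forall_pos_le_add fun ε hε hlt => ?_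
    have hWne : W2 (P.map (fun ω => F (X ω))) (P.map Z) ≠ ∞ := by
      intro h
      rw [h, ENNReal.mul_top hc0] at hlt
      simp at hlt
    set δ : ℝ≥0∞ := (ε : ℝ≥0∞) / c with hδ
    have hδ0 : δ ≠ 0 := by
      rw [hδ]
      simp [ENNReal.div_eq_zero_iff, hc_ne, ENNReal.coe_eq_zero, hε.ne']
    have hWlt : W2 (P.map (fun ω => F (X ω))) (P.map Z)
        < W2 (P.map (fun ω => F (X ω))) (P.map Z) + δ := ENNReal.lt_add_right hWne hδ0
    obtain ⟨π, ⟨hπ1, hπ2⟩, hπc⟩ := exists_coupling_lt hWlt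
    calc W2 (P.map X) (P.map fun ω => G (Z ω))
        ≤ A + c * (∫⁻ p, (‖p.1 - p.2‖₊ : ℝ≥0∞) ^ 2 ∂π) ^ (1/2 : ℝ) := key π hπ1 hπ2
      _ ≤ A + c * (W2 (P.map (fun ω => F (X ω))) (P.map Z) + δ) :=
          add_le_add_right (mul_le_mul_right hπc.le c) A
      _ = A + (c * W2 (P.map (fun ω => F (X ω))) (P.map Z) + c * δ) := by rw [mul_add]
      _ ≤ A + (c * W2 (P.map (fun ω => F (X ω))) (P.map Z) + ε) := by
          refine add_le_add_right (add_le_add_right ?_ _) A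
          rw [hδ]
          exact ENNReal.mul_div_le
      _ = A + c * W2 (P.map (fun ω => F (X ω))) (P.map Z) + ε := by rw [add_assoc]
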